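/- Let G and H be simple graphs, neither of which is complete, and suppose it is not the case that both G and H are a disjoint union of two cliques. Then the modular product G⋄H has diameter 2 if and only if there exist no vertices g,g' ∈ V(G) and h,h' ∈ V(H) satisfying either of the following conditions: (13) N_G[g]=N_G[g'], d_H(h,h') ≥ 3, and (g is universal in G, or {h,h'} is a γ_H-pair); (14) N_H[h]=N_H[h'], d_G(g,g') ≥ 3, and (h is universal in H, or {g,g'} is a γ_G-pair). -/

import Mathlib

open SimpleGraph

/-- The closed neighborhood `N[v]` of a vertex. -/
def closedNbr {α : Type*} (G : SimpleGraph α) (v : α) : Set α :=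
  insert v (G.neighborSet v)

/-- The modular product `G ⋄ H`. -/
def modularProduct {α β : Type*} (G : SimpleGraph α) (H : SimpleGraph β) :
    SimpleGraph (α × β) :=
  SimpleGraph.fromRel (fun x y =>
    (x.1 = y.1 ∧ H.Adj x.2 y.2) ∨
    (G.Adj x.1 y.1 ∧ x.2 = y.2) ∨
    (G.Adj x.1 y.1 ∧ H.Adj x.2 y.2) ∨
    (x.1 ≠ y.1 ∧ x.2 ≠ y.2 ∧ ¬ G.Adj x.1 y.1 ∧ ¬ H.Adj x.2 y.2))

/-- `{g, g'}` is a `γ_G`-pair: the closed neighborhoods are disjoint and cover `V(G)`. -/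
def gammaPair {α : Type*} (G : SimpleGraph α) (g g' : α) : Prop :=
  closedNbr G g ∩ closedNbr G g' = ∅ ∧ closedNbr G g ∪ closedNbr G g' = Set.univ

/-- A universal vertex. -/
def IsUniversal {α : Type*} (G : SimpleGraph α) (v : α) : Prop :=
  closedNbr G v = Set.univ

/-- A complete graph: every two distinct vertices are adjacent. -/
def IsCompleteGraph {α : Type*} (G : SimpleGraph α) : Prop :=
  ∀ u v : α, u ≠ v → G.Adj u v

/-- `G` is a disjoint union of two cliques. -/
def TwoCliques {α : Type*} (G : SimpleGraph α) : Prop :=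
  ∃ A B : Set α, A.Nonempty ∧ B.Nonempty ∧ A ∪ B = Set.univ ∧ A ∩ B = ∅ ∧
    (∀ u ∈ A, ∀ v ∈ A, u ≠ v → G.Adj u v) ∧
    (∀ u ∈ B, ∀ v ∈ B, u ≠ v → G.Adj u v) ∧
    (∀ u ∈ A, ∀ v ∈ B, ¬ G.Adj u v)

/-- `u` and `v` are mutually maximally distant in `X`. -/
def MMD {α : Type*} (X : SimpleGraph α) (u v : α) : Prop :=
  (∀ w, X.Adj u w → X.edist w v ≤ X.edist u v) ∧
  (∀ w, X.Adj v w → X.edist w u ≤ X.edist u v)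

/-- A strong resolving set of `X`. -/
def IsStrongResolvingSet {α : Type*} (X : SimpleGraph α) (S : Set α) : Prop :=
  ∀ u v : α, u ≠ v → ∃ w ∈ S,
    X.dist u w = X.dist u v + X.dist v w ∨ X.dist v w = X.dist v u + X.dist u w

/-- The strong metric dimension of `X`. -/
noncomputable def sdim {α : Type*} (X : SimpleGraph α) : ℕ :=
  sInf {n | ∃ S : Set α, S.ncard = n ∧ IsStrongResolvingSet X S}

/-- The star `K_{1,n}`: the center is `none`, the leaves are `some i`. -/
def starGraph (n : ℕ) : SimpleGraph (Option (Fin n)) :=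
  SimpleGraph.fromRel (fun u v => u = none ∧ v ≠ none)

/-- The vertex cover number `β(X)`. -/
noncomputable def vertexCoverNumber {γ : Type*} (X : SimpleGraph γ) : ℕ :=
  sInf {n | ∃ C : Set γ, C.ncard = n ∧ ∀ u v, X.Adj u v → u ∈ C ∨ v ∈ C}


section Helpers

variable {V : Type*} {X : SimpleGraph V} {u v : V}

lemma mem_closedNbr_iff {G : SimpleGraph V} {g a : V} :
    a ∈ closedNbr G g ↔ a = g ∨ G.Adj g a := by
  simp [closedNbr]

lemma not_mem_closedNbr_iff {G : SimpleGraph V} {g a : V} :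
    a ∉ closedNbr G g ↔ a ≠ g ∧ ¬ G.Adj g a := by
  simp [mem_closedNbr_iff, not_or]

lemma edist_le_two_of_common {w : V} (h1 : X.Adj u w) (h2 : X.Adj w v) :
    X.edist u v ≤ 2 := by
  have ht := X.edist_triangle (u := u) (v := w) (w := v)
  rw [edist_eq_one_iff_adj.mpr h1, edist_eq_one_iff_adj.mpr h2] at ht
  exact le_trans ht (by norm_num)

lemma two_le_edist_of (hne : u ≠ v) (hna : ¬ X.Adj u v) : 2 ≤ X.edist u v := by
  by_contra hc
  rw [not_le] at hc
  have hnt : X.edist u v ≠ ⊤ := (hc.trans_le le_top).ne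
  obtain ⟨p, hp⟩ := SimpleGraph.exists_walk_of_edist_ne_top hnt
  have hl : (p.length : ℕ∞) < 2 := hp ▸ hc
  have hl2 : p.length < 2 := by exact_mod_cast hl
  cases p with
  | nil => exact hne rfl
  | cons h q =>
    cases q with
    | nil => exact hna h
    | cons h' q' =>
      simp only [SimpleGraph.Walk.length_cons] at hl2
      omega

lemma three_le_edist_iff :
    3 ≤ X.edist u v ↔ u ≠ v ∧ ¬ X.Adj u v ∧ ∀ w, ¬ (X.Adj u w ∧ X.Adj w v) := by
  constructor
  · intro h3
    refine ⟨?_, ?_, ?_⟩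
    · rintro rfl
      rw [SimpleGraph.edist_self] at h3
      norm_num at h3
    · intro ha
      rw [← edist_eq_one_iff_adj] at ha
      rw [ha] at h3
      norm_num at h3
    · rintro w ⟨h1, h2⟩
      have h2' := edist_le_two_of_common h1 h2
      have : (3 : ℕ∞) ≤ 2 := le_trans h3 h2'
      norm_num at this
  · rintro ⟨hne, hna, hcom⟩
    by_contra hc
    rw [not_le] at hc
    have hnt : X.edist u v ≠ ⊤ := (hc.trans_le le_top).ne
    obtain ⟨p, hp⟩ := SimpleGraph.exists_walk_of_edist_ne_top hnt
    have hl : (p.length : ℕ∞) < 3 := hp ▸ hc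
    have hl2 : p.length < 3 := by exact_mod_cast hl
    cases p with
    | nil => exact hne rfl
    | cons h q =>
      cases q with
      | nil => exact hna h
      | cons h' q' =>
        cases q' with
        | nil => exact hcom _ ⟨h, h'⟩
        | cons h'' q'' =>
          simp only [SimpleGraph.Walk.length_cons] at hl2
          omega

lemma closedNbr_inter_eq_empty_of_far (hd : 3 ≤ X.edist u v) :
    closedNbr X u ∩ closedNbr X v = ∅ := by
  obtain ⟨hne, hna, hcom⟩ := three_le_edist_iff.mp hd
  ext b
  simp only [Set.mem_inter_iff, mem_closedNbr_iff, Set.mem_empty_iff_false, iff_false, not_and]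
  rintro (rfl | a1) (h2 | a2)
  · exact hne h2
  · exact hna a2.symm
  · exact hna (h2 ▸ a1)
  · exact hcom b ⟨a1, a2.symm⟩

end Helpers

section ModHelpers

variable {α β : Type*} {G : SimpleGraph α} {H : SimpleGraph β}

lemma modAdj {g g' : α} {h h' : β} :
    (modularProduct G H).Adj (g, h) (g', h') ↔
      (g = g' ∧ H.Adj h h') ∨ (G.Adj g g' ∧ h = h') ∨ (G.Adj g g' ∧ H.Adj h h') ∨
      (g ≠ g' ∧ h ≠ h' ∧ ¬ G.Adj g g' ∧ ¬ H.Adj h h') := by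
  rw [modularProduct, SimpleGraph.fromRel_adj]
  constructor
  · rintro ⟨-, hr | hr⟩
    · exact hr
    · rcases hr with ⟨e, a⟩ | ⟨a, e⟩ | ⟨a, b⟩ | ⟨n1, n2, na, nb⟩
      · exact Or.inl ⟨e.symm, a.symm⟩
      · exact Or.inr (Or.inl ⟨a.symm, e.symm⟩)
      · exact Or.inr (Or.inr (Or.inl ⟨a.symm, b.symm⟩))
      · exact Or.inr (Or.inr (Or.inr ⟨n1.symm, n2.symm,
          fun x => na x.symm, fun x => nb x.symm⟩))
  · intro hr
    refine ⟨?_, Or.inl hr⟩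
    rcases hr with ⟨e, a⟩ | ⟨a, e⟩ | ⟨a, b⟩ | ⟨n1, n2, na, nb⟩
    · exact fun hq => a.ne (congrArg Prod.snd hq)
    · exact fun hq => a.ne (congrArg Prod.fst hq)
    · exact fun hq => a.ne (congrArg Prod.fst hq)
    · exact fun hq => n1 (congrArg Prod.fst hq)

lemma swapAdj {g g' : α} {h h' : β} :
    (modularProduct G H).Adj (g, h) (g', h') ↔ (modularProduct H G).Adj (h, g) (h', g') := by
  rw [modAdj, modAdj]
  tauto

lemma adj4 {g a : α} {h b : β} (ha : a ∉ closedNbr G g) (hb : b ∉ closedNbr H h) :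
    (modularProduct G H).Adj (g, h) (a, b) := by
  obtain ⟨h1, h2⟩ := not_mem_closedNbr_iff.mp ha
  obtain ⟨h3, h4⟩ := not_mem_closedNbr_iff.mp hb
  exact modAdj.mpr (Or.inr (Or.inr (Or.inr ⟨h1.symm, h3.symm, h2, h4⟩)))

lemma adj_mem_pattern {g a : α} {h b : β}
    (hadj : (modularProduct G H).Adj (g, h) (a, b)) :
    (a ∈ closedNbr G g ∧ b ∈ closedNbr H h) ∨ (a ∉ closedNbr G g ∧ b ∉ closedNbr H h) := by
  rcases modAdj.mp hadj with ⟨e, x⟩ | ⟨x, e⟩ | ⟨x, y⟩ | ⟨n1, n2, nx, ny⟩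
  · exact Or.inl ⟨mem_closedNbr_iff.mpr (Or.inl e.symm), mem_closedNbr_iff.mpr (Or.inr x)⟩
  · exact Or.inl ⟨mem_closedNbr_iff.mpr (Or.inr x), mem_closedNbr_iff.mpr (Or.inl e.symm)⟩
  · exact Or.inl ⟨mem_closedNbr_iff.mpr (Or.inr x), mem_closedNbr_iff.mpr (Or.inr y)⟩
  · exact Or.inr ⟨not_mem_closedNbr_iff.mpr ⟨fun e => n1 e.symm, nx⟩,
      not_mem_closedNbr_iff.mpr ⟨fun e => n2 e.symm, ny⟩⟩

/-- Condition (13) forces distance at least 3 in the modular product. -/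
lemma far13 (G : SimpleGraph α) (H : SimpleGraph β) (g g' : α) (h h' : β)
    (hN : closedNbr G g = closedNbr G g') (hd : 3 ≤ H.edist h h')
    (hug : _root_.IsUniversal G g ∨ gammaPair H h h') :
    3 ≤ (modularProduct G H).edist (g, h) (g', h') := by
  obtain ⟨hne, hna, hcom⟩ := three_le_edist_iff.mp hd
  have hdisj := closedNbr_inter_eq_empty_of_far hd
  have hgg : g = g' ∨ G.Adj g' g := by
    have hm : g ∈ closedNbr G g' := hN ▸ mem_closedNbr_iff.mpr (Or.inl rfl)
    exact mem_closedNbr_iff.mp hm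
  refine three_le_edist_iff.mpr ⟨?_, ?_, ?_⟩
  · exact fun e => hne (congrArg Prod.snd e)
  · intro ha
    rcases modAdj.mp ha with ⟨e, x⟩ | ⟨x, e⟩ | ⟨x, y⟩ | ⟨n1, n2, nx, ny⟩
    · exact hna x
    · exact hne e
    · exact hna y
    · rcases hgg with e | a
      · exact n1 e
      · exact nx a.symm
  · rintro ⟨a, b⟩ ⟨h1, h2⟩
    rcases adj_mem_pattern h1 with ⟨hag, hbh⟩ | ⟨hag, hbh⟩ <;>
      rcases adj_mem_pattern h2.symm with ⟨hag', hbh'⟩ | ⟨hag', hbh'⟩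
    · exact (Set.eq_empty_iff_forall_notMem.mp hdisj b) ⟨hbh, hbh'⟩
    · exact hag' (hN ▸ hag)
    · exact hag (hN.symm ▸ hag')
    · rcases hug with hu | ⟨-, hun⟩
      · exact hag (hu ▸ Set.mem_univ a)
      · have hb : b ∈ closedNbr H h ∪ closedNbr H h' := hun ▸ Set.mem_univ b
        rcases hb with hb | hb
        · exact hbh hb
        · exact hbh' hb

/-- Key lemma: under no-(13), every distinct nonadjacent pair with `g = g'` or
`G.Adj g g'` has a common neighbor in the modular product. -/
lemma key (G : SimpleGraph α) (H : SimpleGraph β)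
    (no13 : ∀ (g g' : α) (h h' : β), closedNbr G g = closedNbr G g' → 3 ≤ H.edist h h' →
      ¬ (_root_.IsUniversal G g ∨ gammaPair H h h'))
    (g g' : α) (h h' : β) (hne : (g, h) ≠ (g', h'))
    (hna : ¬ (modularProduct G H).Adj (g, h) (g', h'))
    (hcase : g = g' ∨ G.Adj g g') :
    ∃ w, (modularProduct G H).Adj (g, h) w ∧ (modularProduct G H).Adj w (g', h') := by
  have hhne : h ≠ h' := by
    rintro rfl
    rcases hcase with rfl | a
    · exact hne rfl
    · exact hna (modAdj.mpr (Or.inr (Or.inl ⟨a, rfl⟩)))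
  have hhna : ¬ H.Adj h h' := by
    intro a
    rcases hcase with rfl | aG
    · exact hna (modAdj.mpr (Or.inl ⟨rfl, a⟩))
    · exact hna (modAdj.mpr (Or.inr (Or.inr (Or.inl ⟨aG, a⟩))))
  by_cases hcb : ∃ b, H.Adj h b ∧ H.Adj b h'
  · obtain ⟨b, b1, b2⟩ := hcb
    rcases hcase with rfl | aG
    · exact ⟨(g, b), modAdj.mpr (Or.inl ⟨rfl, b1⟩), modAdj.mpr (Or.inl ⟨rfl, b2⟩)⟩
    · exact ⟨(g, b), modAdj.mpr (Or.inl ⟨rfl, b1⟩),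
        modAdj.mpr (Or.inr (Or.inr (Or.inl ⟨aG, b2⟩)))⟩
  · push_neg at hcb
    have hd : 3 ≤ H.edist h h' :=
      three_le_edist_iff.mpr ⟨hhne, hhna, fun b hb => hcb b hb.1 hb.2⟩
    have hdisj := closedNbr_inter_eq_empty_of_far hd
    rcases hcase with rfl | aG
    · have hno := no13 g g h h' rfl hd
      rw [not_or] at hno
      obtain ⟨hnu, hng⟩ := hno
      obtain ⟨a, ha⟩ := (Set.ne_univ_iff_exists_notMem _).mp hnu
      have hBu : closedNbr H h ∪ closedNbr H h' ≠ Set.univ := fun hU => hng ⟨hdisj, hU⟩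
      obtain ⟨b, hb⟩ := (Set.ne_univ_iff_exists_notMem _).mp hBu
      rw [Set.mem_union, not_or] at hb
      exact ⟨(a, b), adj4 ha hb.1, (adj4 ha hb.2).symm⟩
    · by_cases h1 : ∃ a, G.Adj g a ∧ a ∉ closedNbr G g'
      · obtain ⟨a, a1, a2⟩ := h1
        obtain ⟨a3, a4⟩ := not_mem_closedNbr_iff.mp a2
        exact ⟨(a, h), modAdj.mpr (Or.inr (Or.inl ⟨a1, rfl⟩)),
          modAdj.mpr (Or.inr (Or.inr (Or.inr ⟨a3, hhne, fun x => a4 x.symm, hhna⟩)))⟩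
      · by_cases h2 : ∃ a, G.Adj g' a ∧ a ∉ closedNbr G g
        · obtain ⟨a, a1, a2⟩ := h2
          obtain ⟨a3, a4⟩ := not_mem_closedNbr_iff.mp a2
          exact ⟨(a, h'), modAdj.mpr (Or.inr (Or.inr (Or.inr
              ⟨a3.symm, hhne, a4, hhna⟩))),
            modAdj.mpr (Or.inr (Or.inl ⟨a1.symm, rfl⟩))⟩
        · push_neg at h1 h2
          have hNN : closedNbr G g = closedNbr G g' := by
            ext x
            simp only [mem_closedNbr_iff]
            constructor
            · rintro (rfl | ax)
              · exact Or.inr aG.symm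
              · exact mem_closedNbr_iff.mp (h1 x ax)
            · rintro (rfl | ax)
              · exact Or.inr aG
              · exact mem_closedNbr_iff.mp (h2 x ax)
          have hno := no13 g g' h h' hNN hd
          rw [not_or] at hno
          obtain ⟨hnu, hng⟩ := hno
          obtain ⟨a, ha⟩ := (Set.ne_univ_iff_exists_notMem _).mp hnu
          have hBu : closedNbr H h ∪ closedNbr H h' ≠ Set.univ := fun hU => hng ⟨hdisj, hU⟩
          obtain ⟨b, hb⟩ := (Set.ne_univ_iff_exists_notMem _).mp hBu
          rw [Set.mem_union, not_or] at hb
          have ha' : a ∉ closedNbr G g' := hNN ▸ ha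
          exact ⟨(a, b), adj4 ha hb.1, (adj4 ha' hb.2).symm⟩

end ModHelpers
/-- characterization of the modular products of diameter two. -/
theorem modularProduct_diam_eq_two {α β : Type*} (G : SimpleGraph α) (H : SimpleGraph β)
    (hG : ¬ IsCompleteGraph G) (hH : ¬ IsCompleteGraph H)
    (hGH : ¬ (TwoCliques G ∧ TwoCliques H)) :
    (modularProduct G H).ediam = 2 ↔
      ¬ ∃ (g g' : α) (h h' : β),
        ((closedNbr G g = closedNbr G g' ∧ 3 ≤ H.edist h h' ∧
        (_root_.IsUniversal G g ∨ gammaPair H h h')) ∨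
         (closedNbr H h = closedNbr H h' ∧ 3 ≤ G.edist g g' ∧
        (_root_.IsUniversal H h ∨ gammaPair G g g'))) := by
  constructor
  · intro hdiam
    rintro ⟨g, g', h, h', hb | hb⟩
    · have h3 := far13 G H g g' h h' hb.1 hb.2.1 hb.2.2
      have h32 : (3 : ℕ∞) ≤ 2 :=
        le_trans h3 (hdiam ▸ edist_le_ediam (G := modularProduct G H))
      norm_num at h32
    · have h3' := far13 H G h h' g g' hb.1 hb.2.1 hb.2.2
      obtain ⟨n, na, nc⟩ := three_le_edist_iff.mp h3'
      have h3 : 3 ≤ (modularProduct G H).edist (g, h) (g', h') := by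
        refine three_le_edist_iff.mpr ⟨?_, ?_, ?_⟩
        · intro e
          rw [Prod.ext_iff] at e
          exact n (Prod.ext e.2 e.1)
        · exact fun a => na (swapAdj.mp a)
        · rintro ⟨a, b⟩ ⟨x, y⟩
          exact nc (b, a) ⟨swapAdj.mp x, swapAdj.mp y⟩
      have h32 : (3 : ℕ∞) ≤ 2 :=
        le_trans h3 (hdiam ▸ edist_le_ediam (G := modularProduct G H))
      norm_num at h32
  · intro hno
    have no13 : ∀ (g g' : α) (h h' : β), closedNbr G g = closedNbr G g' →
        3 ≤ H.edist h h' → ¬ (_root_.IsUniversal G g ∨ gammaPair H h h') :=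
      fun g g' h h' e d c => hno ⟨g, g', h, h', Or.inl ⟨e, d, c⟩⟩
    have no14 : ∀ (h h' : β) (g g' : α), closedNbr H h = closedNbr H h' →
        3 ≤ G.edist g g' → ¬ (_root_.IsUniversal H h ∨ gammaPair G g g') :=
      fun h h' g g' e d c => hno ⟨g, g', h, h', Or.inr ⟨e, d, c⟩⟩
    rw [IsCompleteGraph] at hG hH
    push_neg at hG hH
    obtain ⟨u, v, hunv, huna⟩ := hG
    obtain ⟨p, q, hpnq, hpna⟩ := hH
    apply le_antisymm
    · rw [ediam_le_iff]
      rintro ⟨g, h⟩ ⟨g', h'⟩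
      by_cases he : (g, h) = (g', h')
      · rw [he, SimpleGraph.edist_self]
        norm_num
      by_cases hadj : (modularProduct G H).Adj (g, h) (g', h')
      · exact le_trans (le_of_eq (edist_eq_one_iff_adj.mpr hadj)) one_le_two
      have hcase : (g = g' ∨ G.Adj g g') ∨ (h = h' ∨ H.Adj h h') := by
        by_contra hc
        push_neg at hc
        exact hadj (modAdj.mpr (Or.inr (Or.inr (Or.inr
          ⟨hc.1.1, hc.2.1, hc.1.2, hc.2.2⟩))))
      rcases hcase with hc | hc
      · obtain ⟨w, w1, w2⟩ := key G H no13 g g' h h' he hadj hc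
        exact edist_le_two_of_common w1 w2
      · have hne' : (h, g) ≠ (h', g') := by
          intro e
          rw [Prod.ext_iff] at e
          exact he (Prod.ext e.2 e.1)
        have hna' : ¬ (modularProduct H G).Adj (h, g) (h', g') :=
          fun a => hadj (swapAdj.mpr a)
        obtain ⟨⟨b, a⟩, w1, w2⟩ := key H G no14 h h' g g' hne' hna' hc
        exact edist_le_two_of_common (swapAdj.mpr w1) (swapAdj.mpr w2)
    · have hna : ¬ (modularProduct G H).Adj (u, p) (v, p) := by
        intro a
        rcases modAdj.mp a with ⟨e, x⟩ | ⟨x, e⟩ | ⟨x, y⟩ | ⟨n1, n2, nx, ny⟩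
        · exact hunv e
        · exact huna x
        · exact huna x
        · exact n2 rfl
      have h2 : 2 ≤ (modularProduct G H).edist (u, p) (v, p) :=
        two_le_edist_of (fun e => hunv (congrArg Prod.fst e)) hna
      exact le_trans h2 (edist_le_ediam (G := modularProduct G H))
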